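/- Let 𝒯 be a probabilistic and/xor tree whose leaves are tuples t_1,…,t_n listed in strictly decreasing order of score, fix a tuple t_i, and let F^i(x,y) be the generating function of 𝒯 obtained by assigning x to the leaves t_l with l < i, y to the leaf t_i, and 1 to the leaves t_l with l > i. Then for every α ∈ ℂ, the PRF^e value Υ_α(t_i) = Σ_{j=1}^n α^j·Pr(r(t_i)=j) satisfies Υ_α(t_i) = F^i(α,α) − F^i(α,0). -/

import Mathlib

/-- A probabilistic and/xor tree with leaves labeled by elements of `L`.
An ∨-node (`xor` node) carries, for each child, the probability of the edge to that child;
an ∧-node (`and` node) simply has a list of children. -/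
inductive AXTree (L : Type) : Type
  | leaf : L → AXTree L
  | orNode : List (ℝ × AXTree L) → AXTree L
  | andNode : List (AXTree L) → AXTree L

namespace AXTree

variable {L : Type}

mutual
/-- Validity of a probabilistic and/xor tree: at each ∨-node, edge probabilities are
nonnegative and sum to at most 1. -/
def valid : AXTree L → Prop
  | .leaf _ => True
  | .orNode cs => (cs.map Prod.fst).sum ≤ 1 ∧ validOr cs
  | .andNode cs => validAnd cs

def validOr : List (ℝ × AXTree L) → Prop
  | [] => True
  | (q, c) :: cs => 0 ≤ q ∧ valid c ∧ validOr cs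

def validAnd : List (AXTree L) → Prop
  | [] => True
  | c :: cs => valid c ∧ validAnd cs
end

mutual
/-- The multiset of (labels of) leaves of an and/xor tree. -/
def leaves : AXTree L → Multiset L
  | .leaf a => {a}
  | .orNode cs => leavesOr cs
  | .andNode cs => leavesAnd cs

def leavesOr : List (ℝ × AXTree L) → Multiset L
  | [] => 0
  | (_, c) :: cs => leaves c + leavesOr cs

def leavesAnd : List (AXTree L) → Multiset L
  | [] => 0
  | c :: cs => leaves c + leavesAnd cs
end

mutual
/-- `dist 𝒯 s` is the probability that the random subset (multiset of leaves) generated by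
the and/xor tree `𝒯` equals `s`: a leaf generates itself; an ∨-node generates the subset of
its `l`-th child with the probability of the corresponding edge, and the empty set with the
remaining probability; an ∧-node generates the (disjoint) union of the independently
generated subsets of its children. -/
noncomputable def dist [DecidableEq L] : AXTree L → Multiset L → ℝ
  | .leaf a, s => if s = {a} then 1 else 0
  | .orNode cs, s => (if s = 0 then 1 - (cs.map Prod.fst).sum else 0) + distOr cs s
  | .andNode cs, s => distAnd cs s

noncomputable def distOr [DecidableEq L] : List (ℝ × AXTree L) → Multiset L → ℝ
  | [], _ => 0
  | (q, c) :: cs, s => q * dist c s + distOr cs s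

/-- Convolution over a list of independent children of an ∧-node. -/
noncomputable def distAnd [DecidableEq L] : List (AXTree L) → Multiset L → ℝ
  | [], s => if s = 0 then 1 else 0
  | c :: cs, s => ∑ t ∈ s.powerset.toFinset, dist c t * distAnd cs (s - t)
end

mutual
/-- The generating function of an and/xor tree with respect to a labeling `π` of its
leaves by elements of a commutative ℝ-algebra `R` (e.g. variables of a polynomial ring):
`F_v = π v` at a leaf, `F_v = (1 - Σ_l p_l) + Σ_l p_l · F_{v_l}` at an ∨-node, and
`F_v = ∏_l F_{v_l}` at an ∧-node. -/
noncomputable def genFun {R : Type} [CommRing R] [Algebra ℝ R] (π : L → R) : AXTree L → R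
  | .leaf a => π a
  | .orNode cs => algebraMap ℝ R (1 - (cs.map Prod.fst).sum) + genFunOr π cs
  | .andNode cs => genFunAnd π cs

noncomputable def genFunOr {R : Type} [CommRing R] [Algebra ℝ R] (π : L → R) :
    List (ℝ × AXTree L) → R
  | [] => 0
  | (q, c) :: cs => algebraMap ℝ R q * genFun π c + genFunOr π cs

noncomputable def genFunAnd {R : Type} [CommRing R] [Algebra ℝ R] (π : L → R) :
    List (AXTree L) → R
  | [] => 1
  | c :: cs => genFun π c * genFunAnd π cs
end

end AXTree


namespace AXTree

variable {L : Type} [DecidableEq L]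


mutual
theorem dist_eq_zero : ∀ (t : AXTree L) (s : Multiset L), ¬ s ≤ t.leaves → dist t s = 0
  | .leaf a, s, h => by
      rw [dist]
      rw [leaves] at h
      exact if_neg (fun hs => h (le_of_eq hs))
  | .orNode cs, s, h => by
      rw [dist, distOr_eq_zero cs s (by rwa [leaves] at h)]
      have hs : s ≠ 0 := fun hs => h (hs ▸ Multiset.zero_le _)
      simp [hs]
  | .andNode cs, s, h => by
      rw [dist]; exact distAnd_eq_zero cs s (by rwa [leaves] at h)

theorem distOr_eq_zero : ∀ (cs : List (ℝ × AXTree L)) (s : Multiset L),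
    ¬ s ≤ leavesOr cs → distOr cs s = 0
  | [], s, _ => rfl
  | (q, c) :: cs, s, h => by
      rw [leavesOr] at h
      rw [distOr, dist_eq_zero c s (fun hs => h (hs.trans (Multiset.le_add_right _ _))),
        distOr_eq_zero cs s (fun hs => h (hs.trans (Multiset.le_add_left _ _)))]
      ring

theorem distAnd_eq_zero : ∀ (cs : List (AXTree L)) (s : Multiset L),
    ¬ s ≤ leavesAnd cs → distAnd cs s = 0
  | [], s, h => by
      rw [leavesAnd] at h
      rw [distAnd]
      exact if_neg (fun hs => h (le_of_eq hs))
  | c :: cs, s, h => by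
      rw [leavesAnd] at h
      rw [distAnd]
      refine Finset.sum_eq_zero fun t ht => ?_
      rw [Multiset.mem_toFinset, Multiset.mem_powerset] at ht
      by_cases h1 : t ≤ (leaves c)
      · rw [distAnd_eq_zero cs (s - t) (fun hs => h ?_), mul_zero]
        calc s = t + (s - t) := (add_tsub_cancel_of_le ht).symm
        _ ≤ leaves c + leavesAnd cs := add_le_add h1 hs
      · rw [dist_eq_zero c t h1, zero_mul]
end

theorem conv {R : Type} [CommRing R] [Algebra ℝ R] (f g : Multiset L → ℝ)
    (P : Multiset L → R) (hP : ∀ u v, P (u + v) = P u * P v) (a b : Multiset L)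
    (hf : ∀ s, ¬ s ≤ a → f s = 0) (hg : ∀ s, ¬ s ≤ b → g s = 0) :
    ∑ s ∈ (a + b).powerset.toFinset,
        algebraMap ℝ R (∑ t ∈ s.powerset.toFinset, f t * g (s - t)) * P s =
      (∑ u ∈ a.powerset.toFinset, algebraMap ℝ R (f u) * P u) *
        (∑ v ∈ b.powerset.toFinset, algebraMap ℝ R (g v) * P v) := by
  set F : Multiset L × Multiset L → R :=
    fun p => algebraMap ℝ R (f p.1 * g p.2) * P (p.1 + p.2) with hF
  have hFf : ∀ p : Multiset L × Multiset L, F p ≠ 0 → f p.1 ≠ 0 ∧ g p.2 ≠ 0 := by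
    intro p hp
    constructor
    · intro h; apply hp; simp [hF, h]
    · intro h; apply hp; simp [hF, h]
  have lhs : ∑ s ∈ (a + b).powerset.toFinset,
      algebraMap ℝ R (∑ t ∈ s.powerset.toFinset, f t * g (s - t)) * P s =
      ∑ x ∈ (a + b).powerset.toFinset.sigma (fun s => s.powerset.toFinset),
        F (x.2, x.1 - x.2) := by
    rw [Finset.sum_sigma]
    refine Finset.sum_congr rfl fun s hs => ?_
    rw [map_sum, Finset.sum_mul]
    refine Finset.sum_congr rfl fun t ht => ?_
    rw [Multiset.mem_toFinset, Multiset.mem_powerset] at ht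
    simp only [hF]
    rw [add_tsub_cancel_of_le ht]
  have rhs : (∑ u ∈ a.powerset.toFinset, algebraMap ℝ R (f u) * P u) *
        (∑ v ∈ b.powerset.toFinset, algebraMap ℝ R (g v) * P v) =
      ∑ p ∈ a.powerset.toFinset ×ˢ b.powerset.toFinset, F p := by
    rw [Finset.sum_mul_sum]
    rw [← Finset.sum_product']
    refine Finset.sum_congr rfl fun p hp => ?_
    simp only [hF, map_mul, hP]
    ring
  classical
  rw [lhs, rhs]
  rw [← Finset.sum_filter_ne_zero ((a + b).powerset.toFinset.sigma _),
    ← Finset.sum_filter_ne_zero (_ ×ˢ _)]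
  refine Finset.sum_nbij' (fun x => (x.2, x.1 - x.2)) (fun p => ⟨p.1 + p.2, p.1⟩)
    ?_ ?_ ?_ ?_ ?_
  · intro x hx
    rw [Finset.mem_filter, Finset.mem_sigma, Multiset.mem_toFinset,
      Multiset.mem_powerset, Multiset.mem_toFinset, Multiset.mem_powerset] at hx
    obtain ⟨⟨h1, h2⟩, hne⟩ := hx
    obtain ⟨hf1, hg1⟩ := hFf _ hne
    have hfa : x.2 ≤ a := by by_contra h; exact hf1 (hf _ h)
    have hgb : x.1 - x.2 ≤ b := by by_contra h; exact hg1 (hg _ h)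
    rw [Finset.mem_filter, Finset.mem_product, Multiset.mem_toFinset,
      Multiset.mem_powerset, Multiset.mem_toFinset, Multiset.mem_powerset]
    exact ⟨⟨hfa, hgb⟩, hne⟩
  · intro p hp
    rw [Finset.mem_filter, Finset.mem_product, Multiset.mem_toFinset,
      Multiset.mem_powerset, Multiset.mem_toFinset, Multiset.mem_powerset] at hp
    obtain ⟨⟨h1, h2⟩, hne⟩ := hp
    rw [Finset.mem_filter, Finset.mem_sigma, Multiset.mem_toFinset,
      Multiset.mem_powerset, Multiset.mem_toFinset, Multiset.mem_powerset]
    refine ⟨⟨add_le_add h1 h2, Multiset.le_add_right _ _⟩, ?_⟩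
    simpa [add_tsub_cancel_left] using hne
  · intro x hx
    rw [Finset.mem_filter, Finset.mem_sigma, Multiset.mem_toFinset,
      Multiset.mem_powerset, Multiset.mem_toFinset, Multiset.mem_powerset] at hx
    obtain ⟨⟨h1, h2⟩, _⟩ := hx
    simp [add_tsub_cancel_of_le h2]
  · intro p hp
    simp [add_tsub_cancel_left]
  · intro x hx
    rfl


theorem sum_powerset_mono {R : Type} [CommRing R] (f : Multiset L → R) (A A' : Multiset L)
    (hA : A ≤ A') (hf : ∀ s, ¬ s ≤ A → f s = 0) :
    ∑ s ∈ A'.powerset.toFinset, f s = ∑ s ∈ A.powerset.toFinset, f s := by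
  refine (Finset.sum_subset ?_ ?_).symm
  · intro s hs
    rw [Multiset.mem_toFinset, Multiset.mem_powerset] at hs ⊢
    exact hs.trans hA
  · intro s _ hns
    exact hf s (by rwa [Multiset.mem_toFinset, Multiset.mem_powerset] at hns)

mutual
theorem genFun_eq {R : Type} [CommRing R] [Algebra ℝ R] (π : L → R) :
    ∀ t : AXTree L, genFun π t =
      ∑ s ∈ t.leaves.powerset.toFinset, algebraMap ℝ R (dist t s) * (s.map π).prod
  | .leaf a => by
      rw [genFun, leaves]
      have h : ({a} : Multiset L).powerset.toFinset = {0, {a}} := by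
        ext s
        simp [Multiset.mem_powerset, Multiset.le_singleton]
      rw [h]
      rw [Finset.sum_insert (by simp), Finset.sum_singleton]
      simp [dist]
  | .orNode cs => by
      rw [genFun, leaves, genFunOr_eq]
      have : ∀ s ∈ (leavesOr cs).powerset.toFinset,
          algebraMap ℝ R (dist (.orNode cs) s) * (s.map π).prod =
          algebraMap ℝ R (if s = 0 then 1 - (cs.map Prod.fst).sum else 0) * (s.map π).prod
            + algebraMap ℝ R (distOr cs s) * (s.map π).prod := by
        intro s _
        rw [dist, map_add, add_mul]
      rw [Finset.sum_congr rfl this, Finset.sum_add_distrib]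
      congr 1
      rw [Finset.sum_eq_single_of_mem (0 : Multiset L)
        (by rw [Multiset.mem_toFinset, Multiset.mem_powerset]; exact Multiset.zero_le _)]
      · simp
      · intro s _ hs
        simp [hs]
  | .andNode cs => by
      rw [genFun, leaves, genFunAnd_eq]
      refine Finset.sum_congr rfl fun s _ => ?_
      rw [dist]

theorem genFunOr_eq {R : Type} [CommRing R] [Algebra ℝ R] (π : L → R) :
    ∀ cs : List (ℝ × AXTree L), genFunOr π cs =
      ∑ s ∈ (leavesOr cs).powerset.toFinset, algebraMap ℝ R (distOr cs s) * (s.map π).prod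
  | [] => by simp [genFunOr, distOr]
  | (q, c) :: cs => by
      rw [genFunOr, leavesOr]
      have : ∀ s ∈ (leaves c + leavesOr cs).powerset.toFinset,
          algebraMap ℝ R (distOr ((q, c) :: cs) s) * (s.map π).prod =
          algebraMap ℝ R (q * dist c s) * (s.map π).prod
            + algebraMap ℝ R (distOr cs s) * (s.map π).prod := by
        intro s _
        rw [distOr, map_add, add_mul]
      rw [Finset.sum_congr rfl this, Finset.sum_add_distrib]
      congr 1
      · rw [sum_powerset_mono _ (leaves c) _ (Multiset.le_add_right _ _)
          (fun s hs => by rw [dist_eq_zero c s hs, mul_zero, map_zero, zero_mul])]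
        rw [genFun_eq π c, Finset.mul_sum]
        refine Finset.sum_congr rfl fun s _ => ?_
        rw [map_mul, mul_assoc]
      · rw [sum_powerset_mono _ (leavesOr cs) _ (Multiset.le_add_left _ _)
          (fun s hs => by rw [distOr_eq_zero cs s hs, map_zero, zero_mul])]
        exact (genFunOr_eq π cs).symm ▸ rfl

theorem genFunAnd_eq {R : Type} [CommRing R] [Algebra ℝ R] (π : L → R) :
    ∀ cs : List (AXTree L), genFunAnd π cs =
      ∑ s ∈ (leavesAnd cs).powerset.toFinset, algebraMap ℝ R (distAnd cs s) * (s.map π).prod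
  | [] => by
      rw [genFunAnd, leavesAnd]
      rw [show ((0 : Multiset L)).powerset.toFinset = {0} by rfl]
      simp [distAnd]
  | c :: cs => by
      rw [genFunAnd, leavesAnd, genFun_eq π c, genFunAnd_eq π cs]
      rw [← conv (dist c) (distAnd cs) (fun s => (s.map π).prod)
        (fun u v => by rw [Multiset.map_add, Multiset.prod_add])
        (leaves c) (leavesAnd cs) (dist_eq_zero c) (distAnd_eq_zero cs)]
      refine Finset.sum_congr rfl fun s _ => ?_
      rw [distAnd]
end


theorem prod_map_ite (s : Multiset L) (p : L → Prop) [DecidablePred p] (x : ℂ) :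
    (s.map fun l => if p l then x else 1).prod = x ^ Multiset.card (s.filter p) := by
  induction s using Multiset.induction_on with
  | empty => simp
  | cons a s ih =>
      rw [Multiset.map_cons, Multiset.prod_cons, Multiset.filter_cons, ih]
      by_cases h : p a
      · simp [h, pow_add, mul_comm]
      · simp [h]

theorem card_filter_le_eq {n : ℕ} (s : Multiset (Fin n)) (i : Fin n) (hnd : s.Nodup)
    (hi : i ∈ s) :
    Multiset.card (s.filter (fun l => l ≤ i)) =
      Multiset.card (s.filter (fun l => l < i)) + 1 := by
  have h1 : s.filter (fun l => l ≤ i) = s.filter (fun l => l < i ∨ l = i) := by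
    apply Multiset.filter_congr
    intro a _
    constructor
    · exact fun h => lt_or_eq_of_le h
    · exact fun h => h.elim le_of_lt le_of_eq
  have h2 := Multiset.filter_add_filter (fun l => l < i) (fun l => l = i) s
  have h3 : s.filter (fun l => l < i ∧ l = i) = 0 := by
    rw [Multiset.filter_eq_nil]
    rintro a _ ⟨h4, h5⟩
    exact absurd (h5 ▸ h4) (lt_irrefl i)
  have h4 : s.filter (fun l => l = i) = {i} := by
    rw [Multiset.filter_eq' s i, Multiset.count_eq_one_of_mem hnd hi]
    rfl
  have h5 := congrArg Multiset.card h2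
  rw [Multiset.card_add, Multiset.card_add, h3, h4] at h5
  simp only [Multiset.card_singleton, Multiset.card_zero, add_zero] at h5
  rw [h1]
  omega

end AXTree

/-- Let `𝒯` be a probabilistic and/xor tree whose leaves are the tuples
`t_0, …, t_{n-1}` (each occurring exactly once), listed in strictly decreasing order of score,
and fix a tuple `t_i`.  Let `F^i(x,y)` be the generating function of `𝒯` obtained by assigning
`x` to the leaves `t_l` with `l < i`, `y` to the leaf `t_i`, and `1` to the leaves `t_l` with
`l > i`.  Then for every `α ∈ ℂ`, the `PRF^e` value
`Υ_α(t_i) = Σ_{j=1}^n α^j · Pr(r(t_i) = j)` satisfies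
`Υ_α(t_i) = F^i(α,α) − F^i(α,0)`. -/
theorem AXTree.prfe_eq_genFun_sub (n : ℕ) (𝒯 : AXTree (Fin n)) (hval : 𝒯.valid)
    (hleaves : AXTree.leaves 𝒯 = (Finset.univ : Finset (Fin n)).val)
    (i : Fin n) (α : ℂ) :
    ∑ j ∈ Finset.Icc 1 n,
        α ^ j *
          ((∑ s ∈ (AXTree.leaves 𝒯).powerset.toFinset.filter
              (fun s => i ∈ s ∧ (s.filter (fun l => l < i)).card + 1 = j),
            AXTree.dist 𝒯 s : ℝ) : ℂ) =
      AXTree.genFun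
          (fun l => if l < i then α else if l = i then α else 1) 𝒯 -
        AXTree.genFun
          (fun l => if l < i then α else if l = i then (0 : ℂ) else 1) 𝒯 := by
  classical
  have hnodupM : (AXTree.leaves 𝒯).Nodup := by rw [hleaves]; exact Finset.univ.nodup
  have hcardM : Multiset.card (AXTree.leaves 𝒯) = n := by
    rw [hleaves]
    change Finset.univ.card = n
    simp
  set π1 : Fin n → ℂ := fun l => if l < i then α else if l = i then α else 1 with hπ1
  set π0 : Fin n → ℂ := fun l => if l < i then α else if l = i then (0 : ℂ) else 1 with hπ0
  rw [AXTree.genFun_eq, AXTree.genFun_eq, ← Finset.sum_sub_distrib]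
  have hsplit : ∀ s ∈ (AXTree.leaves 𝒯).powerset.toFinset,
      algebraMap ℝ ℂ (AXTree.dist 𝒯 s) * (s.map π1).prod
          - algebraMap ℝ ℂ (AXTree.dist 𝒯 s) * (s.map π0).prod
        = algebraMap ℝ ℂ (AXTree.dist 𝒯 s) * ((s.map π1).prod - (s.map π0).prod) :=
    fun s _ => (mul_sub _ _ _).symm
  rw [Finset.sum_congr rfl hsplit]
  have hne : ∀ s ∈ (AXTree.leaves 𝒯).powerset.toFinset,
      algebraMap ℝ ℂ (AXTree.dist 𝒯 s) * ((s.map π1).prod - (s.map π0).prod) ≠ 0 →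
        i ∈ s := by
    intro s _ hne0
    by_contra hi
    apply hne0
    have hmap : s.map π1 = s.map π0 := by
      apply Multiset.map_congr rfl
      intro l hl
      have hli : l ≠ i := fun h => hi (h ▸ hl)
      simp [hπ1, hπ0, hli]
    rw [hmap, sub_self, mul_zero]
  rw [← Finset.sum_filter_of_ne hne]
  have hterm : ∀ s ∈ (AXTree.leaves 𝒯).powerset.toFinset.filter (fun s => i ∈ s),
      algebraMap ℝ ℂ (AXTree.dist 𝒯 s) * ((s.map π1).prod - (s.map π0).prod)
        = algebraMap ℝ ℂ (AXTree.dist 𝒯 s) *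
            α ^ (Multiset.card (s.filter (fun l => l < i)) + 1) := by
    intro s hs
    rw [Finset.mem_filter, Multiset.mem_toFinset, Multiset.mem_powerset] at hs
    obtain ⟨hsle, his⟩ := hs
    have hnd : s.Nodup := Multiset.nodup_of_le hsle hnodupM
    have h0 : (s.map π0).prod = 0 := by
      apply Multiset.prod_eq_zero
      refine Multiset.mem_map.mpr ⟨i, his, ?_⟩
      simp [hπ0]
    have h1 : (s.map π1).prod = α ^ (Multiset.card (s.filter (fun l => l < i)) + 1) := by
      have hmap : s.map π1 = s.map (fun l => if l ≤ i then α else 1) := by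
        apply Multiset.map_congr rfl
        intro l _
        by_cases hlt : l < i
        · simp [hπ1, hlt, le_of_lt hlt]
        · by_cases heq : l = i
          · simp [hπ1, hlt, heq]
          · have hnle : ¬ l ≤ i := fun hle => heq (le_antisymm hle (not_lt.mp hlt))
            simp [hπ1, hlt, heq, hnle]
      rw [hmap, AXTree.prod_map_ite, AXTree.card_filter_le_eq s i hnd his]
    rw [h1, h0, sub_zero]
  rw [Finset.sum_congr rfl hterm]
  have hmaps : ∀ s ∈ (AXTree.leaves 𝒯).powerset.toFinset.filter (fun s => i ∈ s),
      Multiset.card (s.filter (fun l => l < i)) + 1 ∈ Finset.Icc 1 n := by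
    intro s hs
    rw [Finset.mem_filter, Multiset.mem_toFinset, Multiset.mem_powerset] at hs
    obtain ⟨hsle, his⟩ := hs
    rw [Finset.mem_Icc]
    have hlt : Multiset.card (s.filter (fun l => l < i)) < Multiset.card s := by
      apply Multiset.card_lt_card
      refine lt_of_le_of_ne (Multiset.filter_le _ s) fun h => ?_
      have h2 := his
      rw [← h] at h2
      exact absurd (Multiset.of_mem_filter h2) (lt_irrefl i)
    have hcs : Multiset.card s ≤ n :=
      le_trans (Multiset.card_le_card hsle) (le_of_eq hcardM)
    omega
  rw [← Finset.sum_fiberwise_of_maps_to hmaps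
    (fun s => algebraMap ℝ ℂ (AXTree.dist 𝒯 s) *
      α ^ (Multiset.card (Multiset.filter (fun l => l < i) s) + 1))]
  refine Finset.sum_congr rfl fun j hj => ?_
  rw [Finset.filter_filter]
  push_cast
  rw [Finset.mul_sum]
  refine Finset.sum_congr rfl fun s hs => ?_
  rw [Finset.mem_filter] at hs
  obtain ⟨-, -, hcard⟩ := hs
  rw [← hcard, mul_comm]
  norm_num
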